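/- For every f₁ ∈ C[0,α₀] and f₂ ∈ M, the quantity Φ := D*·E₁(α₀,f₁) − 1/F₂(∞,f₂) satisfies Φ₁(α₀) ≤ Φ ≤ Φ₂(α₀), where Φ₁(α₀) := D*·exp(−a·N₁ᴹ·α₀^{μ−ν+2}/(L₁ₘ·(μ−ν+1))) − L₂ᴹ·β·α₀^β·exp(a·N₂ᴹ/((β−σ−1)·L₂ₘ·α₀^{β−σ−2})) and Φ₂(α₀) := D*·exp(−a·N₁ₘ·α₀^{μ−ν+2}/(L₁ᴹ·(μ−ν+1))). -/

import Mathlib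

open Real Set Filter MeasureTheory Topology

noncomputable section

/-- Membership in the space `M`: bounded continuous on `[α₀,∞)`, `f(α₀)=0`, `f(∞)=−1`. -/
def MemM (α₀ : ℝ) (f : ℝ → ℝ) : Prop :=
  ContinuousOn f (Ici α₀) ∧ (∃ C : ℝ, ∀ ξ ∈ Ici α₀, |f ξ| ≤ C) ∧
    f α₀ = 0 ∧ Tendsto f atTop (nhds (-1))

/-- `E₁(η,f) = exp(−α₀·a·∫₀^η N₁*(f)(s)/L₁*(f)(s) ds)`. -/
def E1 (α₀ a : ℝ) (Lstar Nstar : (ℝ → ℝ) → ℝ → ℝ) (f : ℝ → ℝ) (η : ℝ) : ℝ :=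
  Real.exp (-(α₀ * a * ∫ s in (0:ℝ)..η, Nstar f s / Lstar f s))

/-- `E₂(ξ,f) = exp(−α₀·a·∫_{α₀}^{ξ} N₂*(f)(s)/L₂*(f)(s) ds)`. -/
def E2 (α₀ a : ℝ) (Lstar Nstar : (ℝ → ℝ) → ℝ → ℝ) (f : ℝ → ℝ) (ξ : ℝ) : ℝ :=
  Real.exp (-(α₀ * a * ∫ s in α₀..ξ, Nstar f s / Lstar f s))

/-- `F₂(ξ,f) = ∫_{α₀}^{ξ} E₂(s,f)/(s·L₂*(f)(s)) ds`. -/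
def F2 (α₀ a : ℝ) (Lstar Nstar : (ℝ → ℝ) → ℝ → ℝ) (f : ℝ → ℝ) (ξ : ℝ) : ℝ :=
  ∫ s in α₀..ξ, E2 α₀ a Lstar Nstar f s / (s * Lstar f s)

set_option maxHeartbeats 2000000 in
theorem statement14
    (α₀ a Dstar μ ν L1m L1M N1m N1M β σ L2m L2M N2m N2M : ℝ)
    (hα₀ : 0 < α₀) (ha : 0 < a) (hD : 0 < Dstar)
    (hμpos : 0 < μ) (hνpos : 0 < ν) (hL1m : 0 < L1m) (hL1M : 0 < L1M)
    (hN1m : 0 < N1m) (hN1M : 0 < N1M)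
    (hμ : max 1 ν < μ) (hL1mM : L1m ≤ L1M) (hN1mM : N1m ≤ N1M)
    (hβpos : 0 < β) (hσpos : 0 < σ) (hL2m : 0 < L2m) (hL2M : 0 < L2M)
    (hN2m : 0 < N2m) (hN2M : 0 < N2M)
    (hβ : σ + 2 < β) (hL2mM : L2m ≤ L2M) (hN2mM : N2m ≤ N2M)
    (L1star N1star : (ℝ → ℝ) → ℝ → ℝ)
    (hL1cont : ∀ f : ℝ → ℝ, ContinuousOn f (Icc 0 α₀) → ContinuousOn (L1star f) (Ioc 0 α₀))
    (hN1cont : ∀ f : ℝ → ℝ, ContinuousOn f (Icc 0 α₀) → ContinuousOn (N1star f) (Ioc 0 α₀))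
    (hL1bd : ∀ f : ℝ → ℝ, ContinuousOn f (Icc 0 α₀) → ∀ η ∈ Ioc (0:ℝ) α₀,
      L1m * η ^ (-μ) ≤ L1star f η ∧ L1star f η ≤ L1M * η ^ (-μ))
    (hN1bd : ∀ f : ℝ → ℝ, ContinuousOn f (Icc 0 α₀) → ∀ η ∈ Ioc (0:ℝ) α₀,
      N1m * η ^ (-ν) ≤ N1star f η ∧ N1star f η ≤ N1M * η ^ (-ν))
    (L2star N2star : (ℝ → ℝ) → ℝ → ℝ)
    (hL2cont : ∀ f : ℝ → ℝ, MemM α₀ f → ContinuousOn (L2star f) (Ici α₀))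
    (hN2cont : ∀ f : ℝ → ℝ, MemM α₀ f → ContinuousOn (N2star f) (Ici α₀))
    (hL2bd : ∀ f : ℝ → ℝ, MemM α₀ f → ∀ ξ ∈ Ici α₀,
      L2m * ξ ^ β ≤ L2star f ξ ∧ L2star f ξ ≤ L2M * ξ ^ β)
    (hN2bd : ∀ f : ℝ → ℝ, MemM α₀ f → ∀ ξ ∈ Ici α₀,
      N2m * ξ ^ σ ≤ N2star f ξ ∧ N2star f ξ ≤ N2M * ξ ^ σ)
    (f1 : ℝ → ℝ) (hf1 : ContinuousOn f1 (Icc 0 α₀))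
    (hint1 : ∀ η ∈ Icc (0:ℝ) α₀,
      IntervalIntegrable (fun s => N1star f1 s / L1star f1 s) volume 0 η)
    (f2 : ℝ → ℝ) (hf2 : MemM α₀ f2)
    (Ff : ℝ) (hFf : Tendsto (F2 α₀ a L2star N2star f2) atTop (nhds Ff))
    (hFfpos : 0 < Ff) :
    Dstar * Real.exp (-(a * N1M * α₀ ^ (μ - ν + 2) / (L1m * (μ - ν + 1)))) -
        L2M * β * α₀ ^ β *
          Real.exp (a * N2M / ((β - σ - 1) * L2m * α₀ ^ (β - σ - 2))) ≤
      Dstar * E1 α₀ a L1star N1star f1 α₀ - 1 / Ff ∧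
    Dstar * E1 α₀ a L1star N1star f1 α₀ - 1 / Ff ≤
      Dstar * Real.exp (-(a * N1m * α₀ ^ (μ - ν + 2) / (L1M * (μ - ν + 1)))) := by

  have hν : ν < μ := lt_of_le_of_lt (le_max_right 1 ν) hμ
  have h1μ : 1 < μ := lt_of_le_of_lt (le_max_left 1 ν) hμ
  have hμν : (0:ℝ) < μ - ν := by linarith
  have hμν1 : (0:ℝ) < μ - ν + 1 := by linarith
  have hβσ : (0:ℝ) < β - σ - 1 := by linarith
  -- Part 1 : bounds on the integral ∫₀^{α₀} N₁/L₁
  have hq1int : IntervalIntegrable (fun s => N1star f1 s / L1star f1 s) volume 0 α₀ :=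
    hint1 α₀ ⟨hα₀.le, le_rfl⟩
  have hne0 : ∀ᵐ x : ℝ ∂(volume.restrict (Icc 0 α₀)), x ≠ 0 := by
    refine Filter.Eventually.filter_mono (ae_mono Measure.restrict_le_self) ?_
    simp [ae_iff, Real.volume_singleton, Set.setOf_eq_eq_singleton]
  have hbd : ∀ s ∈ Ioc (0:ℝ) α₀,
      (N1m / L1M) * s ^ (μ - ν) ≤ N1star f1 s / L1star f1 s ∧
        N1star f1 s / L1star f1 s ≤ (N1M / L1m) * s ^ (μ - ν) := by
    intro s hs
    have hs0 : 0 < s := hs.1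
    have hL := hL1bd f1 hf1 s hs
    have hN := hN1bd f1 hf1 s hs
    have hLpos : 0 < L1star f1 s :=
      lt_of_lt_of_le (mul_pos hL1m (Real.rpow_pos_of_pos hs0 _)) hL.1
    have hNpos : 0 < N1star f1 s :=
      lt_of_lt_of_le (mul_pos hN1m (Real.rpow_pos_of_pos hs0 _)) hN.1
    have hpow : s ^ (-ν) / s ^ (-μ) = s ^ (μ - ν) := by
      rw [← Real.rpow_sub hs0, show -ν - -μ = μ - ν by ring]
    constructor
    · calc (N1m / L1M) * s ^ (μ - ν) = (N1m * s ^ (-ν)) / (L1M * s ^ (-μ)) := by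
            rw [mul_div_mul_comm, hpow]
        _ ≤ N1star f1 s / L1star f1 s := div_le_div₀ hNpos.le hN.1 hLpos hL.2
    · calc N1star f1 s / L1star f1 s ≤ (N1M * s ^ (-ν)) / (L1m * s ^ (-μ)) :=
            div_le_div₀ (by positivity) hN.2 (by positivity) hL.1
        _ = (N1M / L1m) * s ^ (μ - ν) := by rw [mul_div_mul_comm, hpow]
  have hrint : IntervalIntegrable (fun s : ℝ => s ^ (μ - ν)) volume 0 α₀ :=
    intervalIntegral.intervalIntegrable_rpow' (by linarith)
  have hrval : ∫ s in (0:ℝ)..α₀, s ^ (μ - ν) = α₀ ^ (μ - ν + 1) / (μ - ν + 1) := by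
    rw [integral_rpow (Or.inl (by linarith))]
    rw [Real.zero_rpow (by linarith : μ - ν + 1 ≠ 0)]
    ring
  have hI1lo : (N1m / L1M) * (α₀ ^ (μ - ν + 1) / (μ - ν + 1)) ≤
      ∫ s in (0:ℝ)..α₀, N1star f1 s / L1star f1 s := by
    have h := intervalIntegral.integral_mono_ae_restrict hα₀.le
      (hrint.const_mul (N1m / L1M)) hq1int ?_
    · rwa [intervalIntegral.integral_const_mul, hrval] at h
    · filter_upwards [hne0, ae_restrict_mem measurableSet_Icc] with x hx hxI
      exact (hbd x ⟨lt_of_le_of_ne hxI.1 (Ne.symm hx), hxI.2⟩).1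
  have hI1hi : (∫ s in (0:ℝ)..α₀, N1star f1 s / L1star f1 s) ≤
      (N1M / L1m) * (α₀ ^ (μ - ν + 1) / (μ - ν + 1)) := by
    have h := intervalIntegral.integral_mono_ae_restrict hα₀.le
      hq1int (hrint.const_mul (N1M / L1m)) ?_
    · rwa [intervalIntegral.integral_const_mul, hrval] at h
    · filter_upwards [hne0, ae_restrict_mem measurableSet_Icc] with x hx hxI
      exact (hbd x ⟨lt_of_le_of_ne hxI.1 (Ne.symm hx), hxI.2⟩).2
  have hrw2 : α₀ ^ (μ - ν + 2) = α₀ ^ (μ - ν + 1) * α₀ := by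
    rw [show μ - ν + 2 = (μ - ν + 1) + 1 by ring, Real.rpow_add hα₀, Real.rpow_one]
  have heqlo : a * N1m * α₀ ^ (μ - ν + 2) / (L1M * (μ - ν + 1)) =
      α₀ * a * ((N1m / L1M) * (α₀ ^ (μ - ν + 1) / (μ - ν + 1))) := by
    rw [hrw2]; field_simp
  have heqhi : a * N1M * α₀ ^ (μ - ν + 2) / (L1m * (μ - ν + 1)) =
      α₀ * a * ((N1M / L1m) * (α₀ ^ (μ - ν + 1) / (μ - ν + 1))) := by
    rw [hrw2]; field_simp
  have hE1lo : Real.exp (-(a * N1M * α₀ ^ (μ - ν + 2) / (L1m * (μ - ν + 1)))) ≤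
      E1 α₀ a L1star N1star f1 α₀ := by
    simp only [E1]
    apply Real.exp_le_exp.mpr
    apply neg_le_neg
    rw [heqhi]
    have := mul_le_mul_of_nonneg_left hI1hi (by positivity : (0:ℝ) ≤ α₀ * a)
    linarith
  have hE1hi : E1 α₀ a L1star N1star f1 α₀ ≤
      Real.exp (-(a * N1m * α₀ ^ (μ - ν + 2) / (L1M * (μ - ν + 1)))) := by
    simp only [E1]
    apply Real.exp_le_exp.mpr
    apply neg_le_neg
    rw [heqlo]
    have := mul_le_mul_of_nonneg_left hI1lo (by positivity : (0:ℝ) ≤ α₀ * a)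
    linarith
  -- Part 2 : lower bound on Ff
  have hL2pos : ∀ s ∈ Ici α₀, 0 < L2star f2 s := fun s hs =>
    lt_of_lt_of_le (mul_pos hL2m (Real.rpow_pos_of_pos (lt_of_lt_of_le hα₀ hs) _))
      (hL2bd f2 hf2 s hs).1
  have hq2cont : ContinuousOn (fun s => N2star f2 s / L2star f2 s) (Ici α₀) :=
    (hN2cont f2 hf2).div (hL2cont f2 hf2) (fun s hs => (hL2pos s hs).ne')
  have hrwα : α₀ * α₀ ^ (σ - β + 1) = (α₀ ^ (β - σ - 2))⁻¹ := by
    have h1 : α₀ * α₀ ^ (σ - β + 1) = α₀ ^ (σ - β + 2) := by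
      conv_rhs => rw [show σ - β + 2 = 1 + (σ - β + 1) by ring,
        Real.rpow_add hα₀, Real.rpow_one]
    have h2 : α₀ ^ (σ - β + 2) = (α₀ ^ (β - σ - 2))⁻¹ := by
      rw [← Real.rpow_neg hα₀.le]; congr 1; ring
    rw [h1, h2]
  have hαβσ : (0:ℝ) < α₀ ^ (β - σ - 2) := Real.rpow_pos_of_pos hα₀ _
  have hPbd : ∀ s ∈ Ici α₀,
      α₀ * a * ∫ t in α₀..s, N2star f2 t / L2star f2 t ≤
        a * N2M / ((β - σ - 1) * L2m * α₀ ^ (β - σ - 2)) := by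
    intro s hs
    have hs0 : 0 < s := lt_of_lt_of_le hα₀ hs
    have huIcc : uIcc α₀ s = Icc α₀ s := uIcc_of_le hs
    have hq2i : IntervalIntegrable (fun t => N2star f2 t / L2star f2 t) volume α₀ s :=
      (hq2cont.mono (by rw [huIcc]; exact Icc_subset_Ici_self)).intervalIntegrable
    have h0ni : (0:ℝ) ∉ uIcc α₀ s := by
      rw [huIcc]; exact fun h => absurd h.1 (by linarith)
    have hpt : ∀ t ∈ Icc α₀ s, N2star f2 t / L2star f2 t ≤ (N2M / L2m) * t ^ (σ - β) := by
      intro t ht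
      have ht0 : 0 < t := lt_of_lt_of_le hα₀ ht.1
      have htI : t ∈ Ici α₀ := ht.1
      have hL := hL2bd f2 hf2 t htI
      have hN := hN2bd f2 hf2 t htI
      have hLpos : 0 < L2star f2 t := hL2pos t htI
      have hpow : t ^ σ / t ^ β = t ^ (σ - β) := by rw [← Real.rpow_sub ht0]
      calc N2star f2 t / L2star f2 t ≤ (N2M * t ^ σ) / (L2m * t ^ β) :=
            div_le_div₀ (by positivity) hN.2 (by positivity) hL.1
        _ = (N2M / L2m) * t ^ (σ - β) := by rw [mul_div_mul_comm, hpow]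
    have hri : IntervalIntegrable (fun t : ℝ => (N2M / L2m) * t ^ (σ - β)) volume α₀ s :=
      (intervalIntegral.intervalIntegrable_rpow (Or.inr h0ni)).const_mul _
    have hmono := intervalIntegral.integral_mono_on hs hq2i hri hpt
    rw [intervalIntegral.integral_const_mul,
      integral_rpow (Or.inr ⟨fun h => by linarith, h0ni⟩)] at hmono
    have hsX : 0 < s ^ (σ - β + 1) := Real.rpow_pos_of_pos hs0 _
    have hflip : (s ^ (σ - β + 1) - α₀ ^ (σ - β + 1)) / (σ - β + 1) =
        (α₀ ^ (σ - β + 1) - s ^ (σ - β + 1)) / (β - σ - 1) := by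
      rw [show σ - β + 1 = -(β - σ - 1) by ring, div_neg, ← neg_div]
      ring_nf
    have hstep : (N2M / L2m) * ((s ^ (σ - β + 1) - α₀ ^ (σ - β + 1)) / (σ - β + 1)) ≤
        (N2M / L2m) * (α₀ ^ (σ - β + 1) / (β - σ - 1)) := by
      apply mul_le_mul_of_nonneg_left _ (by positivity : (0:ℝ) ≤ N2M / L2m)
      rw [hflip]
      exact (div_le_div_iff_of_pos_right hβσ).mpr (by linarith)
    have hmul : α₀ ^ (β - σ - 2) * (α₀ * α₀ ^ (σ - β + 1)) = 1 := by
      rw [hrwα]; exact mul_inv_cancel₀ (ne_of_gt hαβσ)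
    have hBeq : α₀ * a * ((N2M / L2m) * (α₀ ^ (σ - β + 1) / (β - σ - 1))) =
        a * N2M / ((β - σ - 1) * L2m * α₀ ^ (β - σ - 2)) := by
      rw [eq_div_iff (by positivity)]
      field_simp
      linear_combination hmul
    calc α₀ * a * ∫ t in α₀..s, N2star f2 t / L2star f2 t ≤
        α₀ * a * ((N2M / L2m) * (α₀ ^ (σ - β + 1) / (β - σ - 1))) :=
          mul_le_mul_of_nonneg_left (hmono.trans hstep) (by positivity)
      _ = a * N2M / ((β - σ - 1) * L2m * α₀ ^ (β - σ - 2)) := hBeq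
  set c : ℝ := Real.exp (-(a * N2M / ((β - σ - 1) * L2m * α₀ ^ (β - σ - 2)))) with hc
  have hcpos : 0 < c := Real.exp_pos _
  have hE2lo : ∀ s ∈ Ici α₀, c ≤ E2 α₀ a L2star N2star f2 s := by
    intro s hs
    simp only [E2]
    rw [hc]
    exact Real.exp_le_exp.mpr (neg_le_neg (hPbd s hs))
  have hF2lo : ∀ ξ ∈ Ici α₀,
      (c / L2M) * ((α₀ ^ (-β) - ξ ^ (-β)) / β) ≤ F2 α₀ a L2star N2star f2 ξ := by
    intro ξ hξ
    have hξ0 : 0 < ξ := lt_of_lt_of_le hα₀ hξ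
    have huIcc : uIcc α₀ ξ = Icc α₀ ξ := uIcc_of_le hξ
    have h0ni : (0:ℝ) ∉ uIcc α₀ ξ := by
      rw [huIcc]; exact fun h => absurd h.1 (by linarith)
    have hq2i : IntervalIntegrable (fun t => N2star f2 t / L2star f2 t) volume α₀ ξ :=
      (hq2cont.mono (by rw [huIcc]; exact Icc_subset_Ici_self)).intervalIntegrable
    have hPcont : ContinuousOn
        (fun s => ∫ t in α₀..s, N2star f2 t / L2star f2 t) (Icc α₀ ξ) := by
      have := intervalIntegral.continuousOn_primitive_interval' hq2i left_mem_uIcc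
      rwa [huIcc] at this
    have hEcont : ContinuousOn (fun s => E2 α₀ a L2star N2star f2 s) (Icc α₀ ξ) := by
      simp only [E2]
      exact Real.continuous_exp.comp_continuousOn ((continuousOn_const.mul hPcont).neg)
    have hdencont : ContinuousOn (fun s => s * L2star f2 s) (Icc α₀ ξ) :=
      continuousOn_id.mul ((hL2cont f2 hf2).mono Icc_subset_Ici_self)
    have hdenpos : ∀ s ∈ Icc α₀ ξ, 0 < s * L2star f2 s := fun s hsm =>
      mul_pos (lt_of_lt_of_le hα₀ hsm.1) (hL2pos s hsm.1)
    have hinti : IntervalIntegrable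
        (fun s => E2 α₀ a L2star N2star f2 s / (s * L2star f2 s)) volume α₀ ξ := by
      apply ContinuousOn.intervalIntegrable
      rw [huIcc]
      exact hEcont.div hdencont (fun s hsm => (hdenpos s hsm).ne')
    have hri : IntervalIntegrable (fun s : ℝ => (c / L2M) * s ^ (-β - 1)) volume α₀ ξ :=
      (intervalIntegral.intervalIntegrable_rpow (Or.inr h0ni)).const_mul _
    have hpt : ∀ s ∈ Icc α₀ ξ, (c / L2M) * s ^ (-β - 1) ≤
        E2 α₀ a L2star N2star f2 s / (s * L2star f2 s) := by
      intro s hsm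
      have hs0 : 0 < s := lt_of_lt_of_le hα₀ hsm.1
      have hL := hL2bd f2 hf2 s hsm.1
      have key : c / (s * (L2M * s ^ β)) = (c / L2M) * s ^ (-β - 1) := by
        have h1 : s * (L2M * s ^ β) = L2M * s ^ (β + 1) := by
          rw [Real.rpow_add hs0, Real.rpow_one]; ring
        have h2 : s ^ (-β - 1) = (s ^ (β + 1))⁻¹ := by
          rw [← Real.rpow_neg hs0.le, show -(β+1) = -β - 1 by ring]
        have h3 : (0:ℝ) < s ^ (β + 1) := Real.rpow_pos_of_pos hs0 _
        rw [h1, h2]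
        field_simp
      rw [← key]
      exact div_le_div₀ (Real.exp_pos _).le (hE2lo s hsm.1) (hdenpos s hsm)
        (by nlinarith [hL.2, hs0])
    have hmono := intervalIntegral.integral_mono_on hξ hri hinti hpt
    rw [intervalIntegral.integral_const_mul,
      integral_rpow (Or.inr ⟨by intro h; nlinarith [hβpos], h0ni⟩)] at hmono
    refine le_trans (le_of_eq ?_) hmono
    rw [show -β - 1 + 1 = -β by ring]
    rw [show (ξ ^ (-β) - α₀ ^ (-β)) / (-β) = (α₀ ^ (-β) - ξ ^ (-β)) / β by
      rw [div_neg, ← neg_div]; ring_nf]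
  have hGlim : Tendsto (fun ξ => (c / L2M) * ((α₀ ^ (-β) - ξ ^ (-β)) / β)) atTop
      (nhds ((c / L2M) * (α₀ ^ (-β) / β))) := by
    have h0 : Tendsto (fun ξ : ℝ => ξ ^ (-β)) atTop (nhds 0) := tendsto_rpow_neg_atTop hβpos
    have := (((tendsto_const_nhds (x := α₀ ^ (-β))).sub h0).div_const β).const_mul (c / L2M)
    simpa using this
  have hFflo : (c / L2M) * (α₀ ^ (-β) / β) ≤ Ff := by
    refine le_of_tendsto_of_tendsto hGlim hFf ?_
    filter_upwards [eventually_ge_atTop α₀] with ξ hξ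
    exact hF2lo ξ hξ
  have hαβpos : (0:ℝ) < α₀ ^ β := Real.rpow_pos_of_pos hα₀ _
  have hlopos : 0 < (c / L2M) * (α₀ ^ (-β) / β) := by
    have : (0:ℝ) < α₀ ^ (-β) := Real.rpow_pos_of_pos hα₀ _
    positivity
  have h1F : 1 / Ff ≤ L2M * β * α₀ ^ β *
      Real.exp (a * N2M / ((β - σ - 1) * L2m * α₀ ^ (β - σ - 2))) := by
    refine (one_div_le_one_div_of_le hlopos hFflo).trans (le_of_eq ?_)
    have hcinv : c⁻¹ = Real.exp (a * N2M / ((β - σ - 1) * L2m * α₀ ^ (β - σ - 2))) := by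
      rw [hc, ← Real.exp_neg, neg_neg]
    rw [← hcinv, Real.rpow_neg hα₀.le]
    field_simp
  refine ⟨?_, ?_⟩
  · have h1 : Dstar * Real.exp (-(a * N1M * α₀ ^ (μ - ν + 2) / (L1m * (μ - ν + 1)))) ≤
        Dstar * E1 α₀ a L1star N1star f1 α₀ := mul_le_mul_of_nonneg_left hE1lo hD.le
    linarith
  · have h2 : Dstar * E1 α₀ a L1star N1star f1 α₀ ≤
        Dstar * Real.exp (-(a * N1m * α₀ ^ (μ - ν + 2) / (L1M * (μ - ν + 1)))) :=
      mul_le_mul_of_nonneg_left hE1hi hD.le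
    have h3 : 0 < 1 / Ff := by positivity
    linarith
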